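/- Let 𝔥 be a clonable family of r-graphs. If a family 𝔉 of r-graphs is 𝔥-locally stable and 𝔥-weight stable, then 𝔉 is 𝔥-stable. -/

import Mathlib

open Filter

namespace TuranGT

/-- An `r`-graph: an `r`-uniform hypergraph with vertex set `{0, ..., n-1} ⊆ ℕ`. -/
structure RGraph (r : ℕ) where
  n : ℕ
  edges : Finset (Finset ℕ)
  uniform : ∀ e ∈ edges, e.card = r
  valid : ∀ e ∈ edges, ∀ v ∈ e, v < n

variable {r : ℕ}

/-- The link of a vertex `v`: the set of `(r-1)`-sets `I` with `I ∪ {v}` an edge. -/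
def link (F : RGraph r) (v : ℕ) : Finset (Finset ℕ) :=
  (F.edges.filter fun e => v ∈ e).image fun e => e.erase v

/-- `G` contains a copy of `H` as a subgraph. -/
def ContainsCopy (G H : RGraph r) : Prop :=
  ∃ f : ℕ → ℕ, Set.InjOn f (Set.Iio H.n) ∧ (∀ v < H.n, f v < G.n) ∧
    ∀ e ∈ H.edges, e.image f ∈ G.edges

/-- `G` is `𝔉`-free: it contains no member of `𝔉` as a subgraph. -/
def FreeFam (𝔉 : Set (RGraph r)) (G : RGraph r) : Prop :=
  ∀ H ∈ 𝔉, ¬ ContainsCopy G H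

/-- The Turán number `ex(n, 𝔉)`. -/
noncomputable def exNum (r n : ℕ) (𝔉 : Set (RGraph r)) : ℕ :=
  sSup {k | ∃ G : RGraph r, G.n = n ∧ FreeFam 𝔉 G ∧ G.edges.card = k}

/-- `φ` witnesses that `G` is a blowup of `F`: fibers of `φ` form a blowup partition. -/
def IsBlowupMap (F G : RGraph r) (φ : ℕ → ℕ) : Prop :=
  (∀ v < G.n, φ v < F.n) ∧
    ∀ e : Finset ℕ, e ∈ G.edges ↔
      ((∀ v ∈ e, v < G.n) ∧ Set.InjOn φ (e : Set ℕ) ∧ e.image φ ∈ F.edges)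

/-- `G` is (isomorphic to) a blowup of `F` (cloning and deleting vertices). -/
def IsBlowup (F G : RGraph r) : Prop := ∃ φ : ℕ → ℕ, IsBlowupMap F G φ

/-- The family `𝔅(S)` of all blowups of `S`. -/
def blowupFam (S : RGraph r) : Set (RGraph r) := {G | IsBlowup S G}

/-- A family is clonable if it is closed under taking blowups. -/
def Clonable (𝔉 : Set (RGraph r)) : Prop :=
  ∀ F ∈ 𝔉, ∀ G : RGraph r, IsBlowup F G → G ∈ 𝔉

/-- `m(𝔉, n)`: maximum number of edges of an `n`-vertex member of `𝔉`. -/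
noncomputable def mFam (𝔉 : Set (RGraph r)) (n : ℕ) : ℕ :=
  sSup {k | ∃ F ∈ 𝔉, F.n = n ∧ F.edges.card = k}

/-- `m(𝔉) = lim_{n → ∞} m(𝔉, n)/n^r` (when the family is smooth). -/
noncomputable def mDen (𝔉 : Set (RGraph r)) : ℝ :=
  limUnder atTop fun n : ℕ => (mFam 𝔉 n : ℝ) / (n : ℝ) ^ r

/-- The edit distance `d_𝔥(F)` from `F` to the family `𝔥`. -/
noncomputable def distFam (𝔥 : Set (RGraph r)) (F : RGraph r) : ℝ :=
  sInf {x : ℝ | ∃ H ∈ 𝔥, H.n = F.n ∧ x = ((symmDiff F.edges H.edges).card : ℝ)}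

/-- `μ` is a probability distribution on the vertex set of `F`. -/
def IsWeight (F : RGraph r) (μ : ℕ → ℝ) : Prop :=
  (∀ v, 0 ≤ μ v) ∧ (∀ v, F.n ≤ v → μ v = 0) ∧ ∑ v ∈ Finset.range F.n, μ v = 1

/-- Weighted density `λ(F, μ)`. -/
noncomputable def lamW (F : RGraph r) (μ : ℕ → ℝ) : ℝ :=
  ∑ e ∈ F.edges, ∏ v ∈ e, μ v

/-- The Lagrangian `λ(F)`. -/
noncomputable def lagrangian (F : RGraph r) : ℝ :=
  sSup {x : ℝ | ∃ μ, IsWeight F μ ∧ x = lamW F μ}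

/-- `λ(𝔥)` for a family of r-graphs. -/
noncomputable def lamFam (𝔥 : Set (RGraph r)) : ℝ :=
  sSup {x : ℝ | ∃ H ∈ 𝔥, ∃ μ, IsWeight H μ ∧ x = lamW H μ}

/-- The uniform distribution `ξ_F`. -/
noncomputable def uniformW (F : RGraph r) : ℕ → ℝ :=
  fun v => if v < F.n then ((F.n : ℝ))⁻¹ else 0

/-- `(G, ν)` is a blowup of the weighted graph `(F, μ)`. -/
def WIsBlowup (F : RGraph r) (μ : ℕ → ℝ) (G : RGraph r) (ν : ℕ → ℝ) : Prop :=
  IsWeight G ν ∧ ∃ φ : ℕ → ℕ, IsBlowupMap F G φ ∧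
    ∀ i < F.n, μ i = ∑ v ∈ (Finset.range G.n).filter (fun v => φ v = i), ν v

/-- `d'(F1, F2, μ)` for graphs on a common vertex set. -/
noncomputable def dPrime (E1 E2 : Finset (Finset ℕ)) (μ : ℕ → ℝ) : ℝ :=
  ∑ e ∈ symmDiff E1 E2, ∏ v ∈ e, μ v

/-- The distance between weighted `r`-graphs. -/
noncomputable def wDist (F1 : RGraph r) (μ1 : ℕ → ℝ) (F2 : RGraph r) (μ2 : ℕ → ℝ) : ℝ :=
  sInf {x : ℝ | ∃ (G1 G2 : RGraph r) (ν : ℕ → ℝ), G1.n = G2.n ∧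
    WIsBlowup F1 μ1 G1 ν ∧ WIsBlowup F2 μ2 G2 ν ∧ x = dPrime G1.edges G2.edges ν}

/-- The weighted distance `d^w_𝔥(F, μ)` from a weighted graph to a family. -/
noncomputable def wDistFam (𝔥 : Set (RGraph r)) (F : RGraph r) (μ : ℕ → ℝ) : ℝ :=
  sInf {x : ℝ | ∃ H ∈ 𝔥, ∃ ν, IsWeight H ν ∧ x = wDist F μ H ν}

/-- `𝔉` is `(𝔥, ε, α)`-locally stable. -/
def LocallyStable (𝔉 𝔥 : Set (RGraph r)) (ε α : ℝ) : Prop :=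
  ∃ n0 : ℕ, ∀ F ∈ 𝔉, n0 ≤ F.n → distFam 𝔥 F ≤ ε * (F.n : ℝ) ^ r →
    (F.edges.card : ℝ) ≤ (mFam 𝔥 F.n : ℝ) - α * distFam 𝔥 F

/-- `𝔉` is `𝔥`-locally stable. -/
def HLocallyStable (𝔉 𝔥 : Set (RGraph r)) : Prop :=
  ∃ ε > (0 : ℝ), ∃ α > (0 : ℝ), LocallyStable 𝔉 𝔥 ε α

/-- `𝔉` is `𝔥`-stable, i.e. `(𝔥, 1, α)`-locally stable for some `α > 0`. -/
def HStable (𝔉 𝔥 : Set (RGraph r)) : Prop :=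
  ∃ α > (0 : ℝ), LocallyStable 𝔉 𝔥 1 α

/-- `𝔉` is `(𝔥, ε, α)`-vertex locally stable. -/
def VertexLocallyStable (𝔉 𝔥 : Set (RGraph r)) (ε α : ℝ) : Prop :=
  ∃ n0 : ℕ, ∀ F ∈ 𝔉, n0 ≤ F.n → distFam 𝔥 F ≤ ε * (F.n : ℝ) ^ r →
    (∀ v < F.n, ((r : ℝ) * mDen 𝔥 - ε) * (F.n : ℝ) ^ (r - 1) ≤ ((link F v).card : ℝ)) →
    (F.edges.card : ℝ) ≤ (mFam 𝔥 F.n : ℝ) - α * distFam 𝔥 F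

/-- `𝔉` is `𝔥`-vertex locally stable. -/
def HVertexLocallyStable (𝔉 𝔥 : Set (RGraph r)) : Prop :=
  ∃ ε > (0 : ℝ), ∃ α > (0 : ℝ), VertexLocallyStable 𝔉 𝔥 ε α

/-- `𝔉` is `(𝔥, ε, α)`-weight locally stable. -/
def WeightLocallyStable (𝔉 𝔥 : Set (RGraph r)) (ε α : ℝ) : Prop :=
  ∀ F ∈ 𝔉, ∀ μ : ℕ → ℝ, IsWeight F μ → wDistFam 𝔥 F μ ≤ ε →
    lamW F μ ≤ lamFam 𝔥 - α * wDistFam 𝔥 F μ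

/-- `𝔉` is `𝔥`-weight locally stable. -/
def HWeightLocallyStable (𝔉 𝔥 : Set (RGraph r)) : Prop :=
  ∃ ε > (0 : ℝ), ∃ α > (0 : ℝ), WeightLocallyStable 𝔉 𝔥 ε α

/-- `𝔉` is `𝔥`-weight stable: `(𝔥, 1, α)`-weight locally stable for some `α > 0`. -/
def HWeightStable (𝔉 𝔥 : Set (RGraph r)) : Prop :=
  ∃ α > (0 : ℝ), WeightLocallyStable 𝔉 𝔥 1 α

/-- `𝔉` is `𝔥`-weakly weight stable. -/
def WeaklyWeightStable (𝔉 𝔥 : Set (RGraph r)) : Prop :=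
  ∀ ε > (0 : ℝ), ∃ δ > (0 : ℝ), ∀ F ∈ 𝔉, ∀ μ : ℕ → ℝ, IsWeight F μ →
    lamFam 𝔥 - δ ≤ lamW F μ → wDistFam 𝔥 F μ ≤ ε

/-- The generalized triangle `T_r` on vertex set `{0, ..., 2r-2}` (for `r ≥ 2`),
with edges `D1 = {0,...,r-1}`, `D2 = {0,...,r-2} ∪ {r}`, `D3 = {r-1, r, ..., 2r-2}`. -/
def genTriangle (r : ℕ) : RGraph r where
  n := 2 * r - 1
  edges :=
    if _h : 2 ≤ r then
      {Finset.range r, insert r (Finset.range (r - 1)), Finset.Ico (r - 1) (2 * r - 1)}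
    else ∅
  uniform := by
    intro e he
    split_ifs at he with h
    · simp only [Finset.mem_insert, Finset.mem_singleton] at he
      rcases he with rfl | rfl | rfl
      · exact Finset.card_range r
      · rw [Finset.card_insert_of_notMem (by simp only [Finset.mem_range]; omega),
          Finset.card_range]
        omega
      · rw [Nat.card_Ico]
        omega
    · simp at he
  valid := by
    intro e he v hv
    split_ifs at he with h
    · simp only [Finset.mem_insert, Finset.mem_singleton] at he
      rcases he with rfl | rfl | rfl
      · simp only [Finset.mem_range] at hv; omega
      · simp only [Finset.mem_insert, Finset.mem_range] at hv; omega
      · simp only [Finset.mem_Ico] at hv; omega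
    · simp at he

/-- The family `Σ_r`: all `r`-graphs with three edges `D1, D2, D3` such that
`|D1 ∩ D2| = r - 1` and `D1 △ D2 ⊆ D3`. -/
def SigmaFam (r : ℕ) : Set (RGraph r) :=
  {G | ∃ D1 D2 D3 : Finset ℕ, G.edges = {D1, D2, D3} ∧
    D1 ≠ D2 ∧ D1 ≠ D3 ∧ D2 ≠ D3 ∧
    (D1 ∩ D2).card = r - 1 ∧ symmDiff D1 D2 ⊆ D3}

/-- The complete graph `K_t` as a `2`-graph. -/
def completeGraph (t : ℕ) : RGraph 2 where
  n := t
  edges := Finset.powersetCard 2 (Finset.range t)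
  uniform := fun _e he => (Finset.mem_powersetCard.1 he).2
  valid := fun _e he v hv => Finset.mem_range.1 ((Finset.mem_powersetCard.1 he).1 hv)

/-- `S` is an `(m, r, r-1)` Steiner system: each `(r-1)`-subset of the vertex set
lies in exactly one edge. -/
def IsSteiner (m : ℕ) (S : RGraph r) : Prop :=
  S.n = m ∧ ∀ I : Finset ℕ, (∀ v ∈ I, v < S.n) → I.card = r - 1 →
    ∃! e, e ∈ S.edges ∧ I ⊆ e

/-- `F` covers pairs: every two vertices lie in a common edge. -/
def CoversPairs (F : RGraph r) : Prop :=
  ∀ u < F.n, ∀ v < F.n, ∃ e ∈ F.edges, u ∈ e ∧ v ∈ e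

/-- Isomorphism of `r`-graphs. -/
def Isomorphic (F G : RGraph r) : Prop :=
  F.n = G.n ∧ ∃ f : ℕ → ℕ, Set.InjOn f (Set.Iio F.n) ∧ (∀ v < F.n, f v < G.n) ∧
    ∀ e : Finset ℕ, e ∈ F.edges ↔ ((∀ v ∈ e, v < F.n) ∧ e.image f ∈ G.edges)

/-- The support of a weighting. -/
noncomputable def suppW (F : RGraph r) (μ : ℕ → ℝ) : Finset ℕ :=
  (Finset.range F.n).filter fun v => μ v ≠ 0

/-- `G` is isomorphic to the subgraph of `F` induced on the vertex set `S`. -/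
def IsIsoInduced (F : RGraph r) (S : Finset ℕ) (G : RGraph r) : Prop :=
  ∃ f : ℕ → ℕ, Set.InjOn f (Set.Iio G.n) ∧ (Finset.range G.n).image f = S ∧
    ∀ e : Finset ℕ, e ∈ G.edges ↔ ((∀ v ∈ e, v < G.n) ∧ e.image f ∈ F.edges)

/-- An `r`-graph is thin if every `(r-1)`-set lies in at most one edge. -/
def ThinG (F : RGraph r) : Prop :=
  ∀ I : Finset ℕ, I.card = r - 1 → ∀ e1 ∈ F.edges, ∀ e2 ∈ F.edges,
    I ⊆ e1 → I ⊆ e2 → e1 = e2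

/-- A Steiner system (or any graph) is balanced if its Lagrangian is attained by
the uniform distribution. -/
def Balanced (F : RGraph r) : Prop := lagrangian F = lamW F (uniformW F)

/-- `e(m, r) = C(m, r-1) / (r m^r)`. -/
noncomputable def eDen (m r : ℕ) : ℝ :=
  (m.choose (r - 1) : ℝ) / ((r : ℝ) * (m : ℝ) ^ r)

/-- `d(m, r) = C(m-1, r-2) / ((r-1) m^{r-1})`. -/
noncomputable def dDen (m r : ℕ) : ℝ :=
  ((m - 1).choose (r - 2) : ℝ) / (((r : ℝ) - 1) * (m : ℝ) ^ (r - 1))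

/-- `S` is uniquely dense around `Σ_r`: the uniform weighting of `S` strictly maximizes the
weighted density among weighted `Σ_r`-free `r`-graphs covering pairs. -/
def UniquelyDense (S : RGraph r) : Prop :=
  (∀ F : RGraph r, FreeFam (SigmaFam r) F → CoversPairs F → ∀ μ : ℕ → ℝ, IsWeight F μ →
    lamW F μ ≤ lamW S (uniformW S)) ∧
  ∀ F : RGraph r, FreeFam (SigmaFam r) F → CoversPairs F → ∀ μ : ℕ → ℝ, IsWeight F μ →
    lamW F μ = lamW S (uniformW S) → Isomorphic F S ∧ μ = uniformW F

/-! ### Auxiliary lemmas -/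

lemma rg_prod_orderEmbOfFin (w : ℕ → ℝ) {e : Finset ℕ} {k : ℕ} (he : e.card = k) :
    ∏ v ∈ e, w v = ∏ i : Fin k, w (e.orderEmbOfFin he i) := by
  have h : e = Finset.univ.image (e.orderEmbOfFin he) := by
    apply Finset.coe_injective
    simp [Set.image_univ]
  conv_lhs => rw [h]
  rw [Finset.prod_image (fun x _ y _ hxy => (e.orderEmbOfFin he).injective hxy)]


lemma rg_sum_prod_le_pow (m k : ℕ) (w : ℕ → ℝ) (hw : ∀ v, 0 ≤ w v)
    (E : Finset (Finset ℕ)) (hcard : ∀ e ∈ E, e.card = k)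
    (hval : ∀ e ∈ E, ∀ v ∈ e, v < m) :
    ∑ e ∈ E, ∏ v ∈ e, w v ≤ (∑ v ∈ Finset.range m, w v) ^ k := by
  classical
  rw [Finset.sum_pow']
  set g : Finset ℕ → (Fin k → ℕ) := fun e =>
    if h : e.card = k then (fun i => e.orderEmbOfFin h i) else fun _ => 0 with hg
  have hge : ∀ (e) (he : e ∈ E), ∀ i : Fin k, g e i = e.orderEmbOfFin (hcard e he) i := by
    intro e he i
    simp only [hg, dif_pos (hcard e he)]
  have hcoe : ∀ e ∈ E, e = Finset.univ.image (g e) := by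
    intro e he
    apply Finset.coe_injective
    have : (fun i => e.orderEmbOfFin (hcard e he) i) = g e := by
      funext i; rw [hge e he i]
    simp [← this, Set.image_univ]
  have hinj : Set.InjOn g ↑E := by
    intro e he e' he' hee
    have := (hcoe e he).trans (hee ▸ (hcoe e' he').symm)
    exact this
  have hsum : ∑ e ∈ E, ∏ v ∈ e, w v = ∑ p ∈ E.image g, ∏ i, w (p i) := by
    rw [Finset.sum_image (fun x hx y hy h => hinj hx hy h)]
    refine Finset.sum_congr rfl fun e he => ?_
    rw [rg_prod_orderEmbOfFin w (hcard e he)]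
    refine Finset.prod_congr rfl fun i _ => ?_
    rw [hge e he i]
  rw [hsum]
  refine Finset.sum_le_sum_of_subset_of_nonneg ?_ ?_
  · intro p hp
    rw [Finset.mem_image] at hp
    obtain ⟨e, he, rfl⟩ := hp
    rw [Fintype.mem_piFinset]
    intro i
    rw [hge e he i]
    exact Finset.mem_range.2 (hval e he _ (Finset.orderEmbOfFin_mem e (hcard e he) i))
  · intro p _ _
    exact Finset.prod_nonneg fun i _ => hw _


lemma rg_pos_of_isWeight {F : RGraph r} {μ : ℕ → ℝ} (h : IsWeight F μ) : 1 ≤ F.n := by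
  by_contra hn
  have h0 : F.n = 0 := by omega
  have := h.2.2
  rw [h0] at this
  simp at this


lemma rg_isWeight_uniformW (F : RGraph r) (h : 1 ≤ F.n) : IsWeight F (uniformW F) := by
  refine ⟨fun v => ?_, fun v hv => ?_, ?_⟩
  · unfold uniformW
    split_ifs
    · positivity
    · exact le_refl 0
  · unfold uniformW
    rw [if_neg (by omega)]
  · unfold uniformW
    rw [Finset.sum_ite_of_true (fun v hv => Finset.mem_range.1 hv), Finset.sum_const,
      Finset.card_range, nsmul_eq_mul]
    field_simp


lemma rg_lamW_uniformW (F : RGraph r) (h : 1 ≤ F.n) :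
    lamW F (uniformW F) = (F.edges.card : ℝ) / (F.n : ℝ) ^ r := by
  unfold lamW
  have : ∀ e ∈ F.edges, ∏ v ∈ e, uniformW F v = ((F.n : ℝ) ^ r)⁻¹ := by
    intro e he
    have : ∏ v ∈ e, uniformW F v = ∏ v ∈ e, ((F.n : ℝ))⁻¹ := by
      refine Finset.prod_congr rfl fun v hv => ?_
      unfold uniformW
      rw [if_pos (F.valid e he v hv)]
    rw [this, Finset.prod_const, F.uniform e he, inv_pow]
  rw [Finset.sum_congr rfl this, Finset.sum_const, nsmul_eq_mul, div_eq_mul_inv]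


lemma rg_lamW_le_one {F : RGraph r} {μ : ℕ → ℝ} (h : IsWeight F μ) : lamW F μ ≤ 1 := by
  have := rg_sum_prod_le_pow F.n r μ h.1 F.edges F.uniform
    (fun e he v hv => F.valid e he v hv)
  rw [h.2.2] at this
  simpa [lamW] using this


lemma rg_dPrime_nonneg {G1 G2 : RGraph r} {w : ℕ → ℝ} (hw : ∀ v, 0 ≤ w v) :
    0 ≤ dPrime G1.edges G2.edges w := by
  exact Finset.sum_nonneg fun e _ => Finset.prod_nonneg fun v _ => hw v


lemma rg_dPrime_le_one {G1 G2 : RGraph r} (hN : G1.n = G2.n) {w : ℕ → ℝ}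
    (hw : IsWeight G1 w) : dPrime G1.edges G2.edges w ≤ 1 := by
  unfold dPrime
  have hsub : ∀ e ∈ symmDiff G1.edges G2.edges, e.card = r ∧ ∀ v ∈ e, v < G1.n := by
    intro e he
    rw [Finset.mem_symmDiff] at he
    rcases he with ⟨h1, _⟩ | ⟨h2, _⟩
    · exact ⟨G1.uniform e h1, fun v hv => G1.valid e h1 v hv⟩
    · exact ⟨G2.uniform e h2, fun v hv => hN ▸ G2.valid e h2 v hv⟩
  have := rg_sum_prod_le_pow G1.n r w hw.1 (symmDiff G1.edges G2.edges)
    (fun e he => (hsub e he).1) (fun e he => (hsub e he).2)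
  rw [hw.2.2] at this
  simpa using this


lemma rg_wDist_nonneg (F1 : RGraph r) (μ1 : ℕ → ℝ) (F2 : RGraph r) (μ2 : ℕ → ℝ) :
    0 ≤ wDist F1 μ1 F2 μ2 := by
  apply Real.sInf_nonneg
  rintro x ⟨G1, G2, ν, _, hB1, _, rfl⟩
  exact rg_dPrime_nonneg fun v => hB1.1.1 v


open scoped Classical in
/-- The blowup of `H` along a map `φ`. -/
noncomputable def blowupOf (H : RGraph r) (n : ℕ) (φ : ℕ → ℕ) : RGraph r where
  n := n
  edges := (Finset.powersetCard r (Finset.range n)).filter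
    fun e => Set.InjOn φ ↑e ∧ e.image φ ∈ H.edges
  uniform := by
    intro e he
    simp only [Finset.mem_filter, Finset.mem_powersetCard] at he
    exact he.1.2
  valid := by
    intro e he v hv
    simp only [Finset.mem_filter, Finset.mem_powersetCard] at he
    exact Finset.mem_range.1 (he.1.1 hv)

lemma rg_mem_blowupOf {H : RGraph r} {n : ℕ} {φ : ℕ → ℕ} (hφ : ∀ v < n, φ v < H.n)
    {e : Finset ℕ} :
    e ∈ (blowupOf H n φ).edges ↔
      ((∀ v ∈ e, v < n) ∧ Set.InjOn φ ↑e ∧ e.image φ ∈ H.edges) := by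
  unfold blowupOf
  simp only [Finset.mem_filter, Finset.mem_powersetCard]
  constructor
  · rintro ⟨⟨hsub, hcard⟩, hinj, him⟩
    exact ⟨fun v hv => Finset.mem_range.1 (hsub hv), hinj, him⟩
  · rintro ⟨hval, hinj, him⟩
    refine ⟨⟨fun v hv => Finset.mem_range.2 (hval v hv), ?_⟩, hinj, him⟩
    rw [← Finset.card_image_of_injOn hinj]
    exact H.uniform _ him


lemma rg_isBlowupMap_blowupOf {H : RGraph r} {n : ℕ} {φ : ℕ → ℕ}
    (hφ : ∀ v < n, φ v < H.n) : IsBlowupMap H (blowupOf H n φ) φ := by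
  constructor
  · intro v hv
    exact hφ v hv
  · intro e
    rw [rg_mem_blowupOf hφ]
    exact Iff.rfl


lemma rg_exists_common_blowup (F H : RGraph r) (μ ν : ℕ → ℝ)
    (hμ : IsWeight F μ) (hν : IsWeight H ν) :
    ∃ (G1 G2 : RGraph r) (w : ℕ → ℝ), G1.n = G2.n ∧
      WIsBlowup F μ G1 w ∧ WIsBlowup H ν G2 w := by
  classical
  have hn : 1 ≤ F.n := rg_pos_of_isWeight hμ
  have hm : 1 ≤ H.n := rg_pos_of_isWeight hν
  set n := F.n with hndef
  set m := H.n with hmdef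
  set N := n * m with hNdef
  set φ1 : ℕ → ℕ := fun v => v / m with hφ1def
  set φ2 : ℕ → ℕ := fun v => v % m with hφ2def
  have hφ1 : ∀ v < N, φ1 v < F.n := by
    intro v hv
    simpa [hφ1def] using (Nat.div_lt_iff_lt_mul (by omega)).2 hv
  have hφ2 : ∀ v < N, φ2 v < H.n := by
    intro v _
    exact Nat.mod_lt _ (by omega)
  set w : ℕ → ℝ := fun v => if v < N then μ (v / m) * ν (v % m) else 0 with hwdef
  have haux : ∀ i < n, ∀ j < m, (i * m + j) / m = i ∧ (i * m + j) % m = j ∧ i * m + j < N := by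
    intro i hi j hj
    have e1 : i * m + j = j + m * i := by ring
    refine ⟨?_, ?_, ?_⟩
    · rw [e1, Nat.add_mul_div_left _ _ (by omega), Nat.div_eq_of_lt hj]
      omega
    · rw [e1, Nat.add_mul_mod_self_left, Nat.mod_eq_of_lt hj]
    · calc i * m + j < i * m + m := by omega
        _ = (i + 1) * m := by ring
        _ ≤ n * m := Nat.mul_le_mul_right m (by omega)
  have himg1 : ∀ i < n, (Finset.range N).filter (fun v => φ1 v = i) =
      (Finset.range m).image (fun j => i * m + j) := by
    intro i hi
    ext v
    simp only [Finset.mem_filter, Finset.mem_range, Finset.mem_image, hφ1def]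
    constructor
    · rintro ⟨hvN, hdiv⟩
      refine ⟨v % m, Nat.mod_lt _ (by omega), ?_⟩
      rw [← hdiv]
      exact Nat.div_add_mod' v m
    · rintro ⟨j, hj, rfl⟩
      obtain ⟨hd, _, hN⟩ := haux i hi j hj
      exact ⟨hN, hd⟩
  have himg2 : ∀ j < m, (Finset.range N).filter (fun v => φ2 v = j) =
      (Finset.range n).image (fun i => i * m + j) := by
    intro j hj
    ext v
    simp only [Finset.mem_filter, Finset.mem_range, Finset.mem_image, hφ2def]
    constructor
    · rintro ⟨hvN, hmod⟩
      refine ⟨v / m, (Nat.div_lt_iff_lt_mul (by omega)).2 hvN, ?_⟩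
      rw [← hmod]
      exact Nat.div_add_mod' v m
    · rintro ⟨i, hi, rfl⟩
      obtain ⟨_, hd, hN⟩ := haux i hi j hj
      exact ⟨hN, hd⟩
  have hinj1 : ∀ i, Function.Injective (fun j => i * m + j) := by
    intro i x y hxy
    simpa using hxy
  have hinj2 : ∀ j, Function.Injective (fun i : ℕ => i * m + j) := by
    intro j x y hxy
    simp only [add_left_inj] at hxy
    exact Nat.eq_of_mul_eq_mul_right (by omega) hxy
  have hfib1 : ∀ i < n, ∑ v ∈ (Finset.range N).filter (fun v => φ1 v = i), w v = μ i := by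
    intro i hi
    rw [himg1 i hi, Finset.sum_image (fun x _ y _ h => hinj1 i h)]
    have : ∀ j ∈ Finset.range m, w (i * m + j) = μ i * ν j := by
      intro j hj
      rw [Finset.mem_range] at hj
      obtain ⟨hd, hmo, hN⟩ := haux i hi j hj
      simp only [hwdef, if_pos hN, hd, hmo]
    rw [Finset.sum_congr rfl this, ← Finset.mul_sum, hν.2.2, mul_one]
  have hfib2 : ∀ j < m, ∑ v ∈ (Finset.range N).filter (fun v => φ2 v = j), w v = ν j := by
    intro j hj
    rw [himg2 j hj, Finset.sum_image (fun x _ y _ h => hinj2 j h)]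
    have : ∀ i ∈ Finset.range n, w (i * m + j) = μ i * ν j := by
      intro i hi
      rw [Finset.mem_range] at hi
      obtain ⟨hd, hmo, hN⟩ := haux i hi j hj
      simp only [hwdef, if_pos hN, hd, hmo]
    rw [Finset.sum_congr rfl this, ← Finset.sum_mul, hμ.2.2, one_mul]
  have hwnonneg : ∀ v, 0 ≤ w v := by
    intro v
    simp only [hwdef]
    split_ifs
    · exact mul_nonneg (hμ.1 _) (hν.1 _)
    · exact le_refl 0
  have hwsum : ∑ v ∈ Finset.range N, w v = 1 := by
    rw [← Finset.sum_fiberwise_of_maps_to (g := φ1) (t := Finset.range n)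
      (fun v hv => Finset.mem_range.2 (hφ1 v (Finset.mem_range.1 hv)))]
    have : ∀ i ∈ Finset.range n, ∑ v ∈ (Finset.range N).filter (fun v => φ1 v = i), w v = μ i :=
      fun i hi => hfib1 i (Finset.mem_range.1 hi)
    rw [Finset.sum_congr rfl this, hμ.2.2]
  have hw1 : IsWeight (blowupOf F N φ1) w := by
    refine ⟨hwnonneg, fun v hv => ?_, hwsum⟩
    simp only [hwdef]
    rw [if_neg]
    exact not_lt.2 hv
  have hw2 : IsWeight (blowupOf H N φ2) w := by
    refine ⟨hwnonneg, fun v hv => ?_, hwsum⟩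
    simp only [hwdef]
    rw [if_neg]
    exact not_lt.2 hv
  refine ⟨blowupOf F N φ1, blowupOf H N φ2, w, rfl, ?_, ?_⟩
  · exact ⟨hw1, φ1, rg_isBlowupMap_blowupOf hφ1,
      fun i hi => (hfib1 i hi).symm⟩
  · exact ⟨hw2, φ2, rg_isBlowupMap_blowupOf hφ2,
      fun i hi => (hfib2 i hi).symm⟩

lemma rg_exists_fiber_map (h : ℕ) (m : ℕ → ℕ) (hh : 1 ≤ h) :
    ∃ φ : ℕ → ℕ, (∀ v, φ v < h) ∧ ∀ i < h,
      ((Finset.range (∑ j ∈ Finset.range h, m j)).filter fun v => φ v = i) =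
        Finset.Ico (∑ j ∈ Finset.range i, m j) (∑ j ∈ Finset.range (i + 1), m j) := by
  classical
  set c : ℕ → ℕ := fun i => ∑ j ∈ Finset.range i, m j with hc
  have hcmono : Monotone c := fun i j hij =>
    Finset.sum_le_sum_of_subset (Finset.range_subset_range.2 hij)
  have hfind : ∀ v, v < c h → ∃ i, v < c (i + 1) := by
    intro v hv
    refine ⟨h - 1, ?_⟩
    have heq : h - 1 + 1 = h := by omega
    rw [heq]
    exact hv
  set φ : ℕ → ℕ := fun v =>
    if hv : ∃ i, v < c (i + 1) then min (Nat.find hv) (h - 1) else 0 with hφdef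
  have hφlt : ∀ v, φ v < h := by
    intro v
    simp only [hφdef]
    split_ifs with hv
    · omega
    · omega
  have hφeq : ∀ v, v < c h → ∀ i, (φ v = i ↔ (c i ≤ v ∧ v < c (i + 1))) := by
    intro v hv i
    have hex := hfind v hv
    have hfle : Nat.find hex ≤ h - 1 := by
      apply Nat.find_min' hex
      have heq : h - 1 + 1 = h := by omega
      rw [heq]
      exact hv
    have hφv : φ v = Nat.find hex := by
      simp only [hφdef, dif_pos hex]
      omega
    rw [hφv]
    constructor
    · rintro rfl
      refine ⟨?_, Nat.find_spec hex⟩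
      rcases Nat.eq_zero_or_pos (Nat.find hex) with h0 | h0
      · rw [h0]
        simp [hc]
      · by_contra hlt
        push_neg at hlt
        have hmin := Nat.find_min hex (m := Nat.find hex - 1) (by omega)
        have heq : Nat.find hex - 1 + 1 = Nat.find hex := by omega
        rw [heq] at hmin
        omega
    · rintro ⟨hlo, hhi⟩
      have h1 : Nat.find hex ≤ i := Nat.find_min' hex hhi
      by_contra hne
      have h2 : Nat.find hex < i := by omega
      have h3 : c (Nat.find hex + 1) ≤ c i := hcmono (by omega)
      have h4 := Nat.find_spec hex
      omega
  refine ⟨φ, hφlt, fun i hi => ?_⟩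
  ext v
  simp only [Finset.mem_filter, Finset.mem_range, Finset.mem_Ico]
  constructor
  · rintro ⟨hvn, hφv⟩
    exact (hφeq v hvn i).1 hφv
  · rintro ⟨hlo, hhi⟩
    have hvn : v < c h := lt_of_lt_of_le hhi (hcmono (by omega))
    exact ⟨hvn, (hφeq v hvn i).2 ⟨hlo, hhi⟩⟩

lemma rg_prod_sub_prod_le (E : Finset ℕ) (a b : ℕ → ℝ) (n : ℝ) (hn : 0 ≤ n)
    (h0 : ∀ i ∈ E, 0 ≤ b i) (hba : ∀ i ∈ E, b i ≤ a i) (han : ∀ i ∈ E, a i ≤ n)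
    (hab : ∀ i ∈ E, a i - b i ≤ 1) :
    ∏ i ∈ E, a i - ∏ i ∈ E, b i ≤ (E.card : ℝ) * n ^ (E.card - 1) := by
  classical
  induction E using Finset.induction with
  | empty => simp
  | insert _ _ hx ih =>
    rename_i x E'
    have h0' : ∀ i ∈ E', 0 ≤ b i := fun i hi => h0 i (Finset.mem_insert_of_mem hi)
    have hba' : ∀ i ∈ E', b i ≤ a i := fun i hi => hba i (Finset.mem_insert_of_mem hi)
    have han' : ∀ i ∈ E', a i ≤ n := fun i hi => han i (Finset.mem_insert_of_mem hi)
    have hab' : ∀ i ∈ E', a i - b i ≤ 1 := fun i hi => hab i (Finset.mem_insert_of_mem hi)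
    have IH := ih h0' hba' han' hab'
    have hxmem := Finset.mem_insert_self x E'
    rw [Finset.prod_insert hx, Finset.prod_insert hx, Finset.card_insert_of_notMem hx]
    have hprodb_nonneg : 0 ≤ ∏ i ∈ E', b i := Finset.prod_nonneg h0'
    have hprod_le : ∏ i ∈ E', b i ≤ ∏ i ∈ E', a i :=
      Finset.prod_le_prod h0' hba'
    have hprodb_le : ∏ i ∈ E', b i ≤ n ^ E'.card := by
      calc ∏ i ∈ E', b i ≤ ∏ _i ∈ E', n :=
            Finset.prod_le_prod h0' (fun i hi => le_trans (hba' i hi) (han' i hi))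
        _ = n ^ E'.card := Finset.prod_const n
    have key : a x * ∏ i ∈ E', a i - b x * ∏ i ∈ E', b i
        = a x * (∏ i ∈ E', a i - ∏ i ∈ E', b i) + (a x - b x) * ∏ i ∈ E', b i := by
      ring
    rw [key]
    have h1 : a x * (∏ i ∈ E', a i - ∏ i ∈ E', b i) ≤ (E'.card : ℝ) * n ^ E'.card := by
      calc a x * (∏ i ∈ E', a i - ∏ i ∈ E', b i)
          ≤ n * ((E'.card : ℝ) * n ^ (E'.card - 1)) := by
            apply mul_le_mul (han x hxmem) IH (by linarith) hn
        _ ≤ (E'.card : ℝ) * n ^ E'.card := by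
            rcases Nat.eq_zero_or_pos E'.card with h | h
            · simp [h]
            · have hpow : n ^ E'.card = n ^ (E'.card - 1) * n := by
                rw [← pow_succ]
                congr 1
                omega
              rw [hpow]
              exact le_of_eq (by ring)
    have h2 : (a x - b x) * ∏ i ∈ E', b i ≤ n ^ E'.card := by
      calc (a x - b x) * ∏ i ∈ E', b i ≤ 1 * ∏ i ∈ E', b i :=
            mul_le_mul_of_nonneg_right (hab x hxmem) hprodb_nonneg
        _ = ∏ i ∈ E', b i := one_mul _
        _ ≤ n ^ E'.card := hprodb_le
    have : (E'.card : ℝ) * n ^ E'.card + n ^ E'.card = ((E'.card + 1 : ℕ) : ℝ) * n ^ E'.card := by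
      push_cast
      ring
    have hfin : (E'.card + 1 : ℕ) - 1 = E'.card := by omega
    rw [hfin]
    linarith


lemma rg_card_le_of_n_eq {F : RGraph r} {n : ℕ} (h : F.n = n) :
    F.edges.card ≤ (Finset.powersetCard r (Finset.range n)).card := by
  apply Finset.card_le_card
  intro e he
  rw [Finset.mem_powersetCard]
  exact ⟨fun v hv => Finset.mem_range.2 (h ▸ F.valid e he v hv), F.uniform e he⟩


lemma rg_le_mFam {𝔥 : Set (RGraph r)} {G : RGraph r} {n : ℕ} (hG : G ∈ 𝔥) (hn : G.n = n) :
    G.edges.card ≤ mFam 𝔥 n := by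
  apply le_csSup
  · refine ⟨(Finset.powersetCard r (Finset.range n)).card, ?_⟩
    rintro k ⟨F, _, hFn, rfl⟩
    exact rg_card_le_of_n_eq hFn
  · exact ⟨G, hG, hn, rfl⟩


lemma rg_mFam_ge_blowup {𝔥 : Set (RGraph r)} (hc : Clonable 𝔥) {H : RGraph r} (hH : H ∈ 𝔥)
    {μ : ℕ → ℝ} (hμ : IsWeight H μ) (n : ℕ) (hn : 1 ≤ n) :
    lamW H μ * (n : ℝ) ^ r - (H.edges.card : ℝ) * r * (n : ℝ) ^ (r - 1) ≤ (mFam 𝔥 n : ℝ) := by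
  classical
  have hh : 1 ≤ H.n := rg_pos_of_isWeight hμ
  set h := H.n with hhdef
  set m0 : ℕ → ℕ := fun i => ⌊μ i * n⌋₊ with hm0def
  have hμ1 : ∀ i < h, μ i ≤ 1 := by
    intro i hi
    have := Finset.single_le_sum (f := μ) (fun j _ => hμ.1 j) (Finset.mem_range.2 hi)
    rw [hμ.2.2] at this
    exact this
  have hb_le_a : ∀ i, (m0 i : ℝ) ≤ μ i * n := fun i =>
    Nat.floor_le (mul_nonneg (hμ.1 i) (by positivity))
  have hS0 : ∑ i ∈ Finset.range h, m0 i ≤ n := by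
    have hr : ((∑ i ∈ Finset.range h, m0 i : ℕ) : ℝ) ≤ (n : ℝ) := by
      push_cast
      calc ∑ i ∈ Finset.range h, (m0 i : ℝ) ≤ ∑ i ∈ Finset.range h, μ i * n :=
            Finset.sum_le_sum fun i _ => hb_le_a i
        _ = (∑ i ∈ Finset.range h, μ i) * n := by rw [Finset.sum_mul]
        _ = n := by rw [hμ.2.2, one_mul]
    exact_mod_cast hr
  set msz : ℕ → ℕ := fun i => m0 i + (if i = 0 then n - ∑ j ∈ Finset.range h, m0 j else 0)
    with hmszdef
  have hsum : ∑ i ∈ Finset.range h, msz i = n := by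
    simp only [hmszdef]
    rw [Finset.sum_add_distrib, Finset.sum_ite_eq' (Finset.range h) 0
      (fun _ => n - ∑ j ∈ Finset.range h, m0 j)]
    rw [if_pos (Finset.mem_range.2 (by omega))]
    omega
  obtain ⟨φ, hφlt, hφfib⟩ := rg_exists_fiber_map h msz hh
  rw [hsum] at hφfib
  have hφH : ∀ v < n, φ v < H.n := fun v _ => hφlt v
  set G := blowupOf H n φ with hGdef
  have hGmem : G ∈ 𝔥 := hc H hH G ⟨φ, rg_isBlowupMap_blowupOf hφH⟩
  have hmFam : G.edges.card ≤ mFam 𝔥 n := rg_le_mFam hGmem rfl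
  have fibcard : ∀ i < h, ((Finset.range n).filter (fun v => φ v = i)).card = msz i := by
    intro i hi
    rw [hφfib i hi, Nat.card_Ico, Finset.sum_range_succ]
    omega
  have hmaps : ∀ e ∈ G.edges, e.image φ ∈ H.edges := by
    intro e he
    exact ((rg_mem_blowupOf hφH).1 he).2.2
  have hcount : ∑ E ∈ H.edges, ∏ i ∈ E, msz i ≤ G.edges.card := by
    rw [Finset.card_eq_sum_card_fiberwise hmaps]
    refine Finset.sum_le_sum fun E hE => ?_
    have hEvalid : ∀ i ∈ E, i < h := fun i hi => H.valid E hE i hi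
    have hprod : ∏ i ∈ E, msz i = (E.pi (fun a => (Finset.range n).filter (fun v => φ v = a))).card := by
      rw [Finset.card_pi]
      exact (Finset.prod_congr rfl fun i hi => (fibcard i (hEvalid i hi)).symm)
    rw [hprod]
    set Φ : (∀ a ∈ E, ℕ) → Finset ℕ := fun g => E.attach.image (fun a => g a.1 a.2) with hΦdef
    have hgmem : ∀ g ∈ E.pi (fun a => (Finset.range n).filter (fun v => φ v = a)),
        ∀ (a : ℕ) (ha : a ∈ E), g a ha < n ∧ φ (g a ha) = a := by
      intro g hg a ha
      have := Finset.mem_pi.1 hg a ha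
      rw [Finset.mem_filter, Finset.mem_range] at this
      exact this
    apply Finset.card_le_card_of_injOn Φ
    · intro g hg
      have hg' := hgmem g hg
      have hval : ∀ v ∈ Φ g, v < n := by
        intro v hv
        rw [hΦdef] at hv
        simp only [Finset.mem_image, Finset.mem_attach, true_and] at hv
        obtain ⟨a, rfl⟩ := hv
        exact (hg' a.1 a.2).1
      have hφval : ∀ v ∈ Φ g, ∃ (a : ℕ) (ha : a ∈ E), v = g a ha ∧ φ v = a := by
        intro v hv
        rw [hΦdef] at hv
        simp only [Finset.mem_image, Finset.mem_attach, true_and] at hv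
        obtain ⟨a, rfl⟩ := hv
        exact ⟨a.1, a.2, rfl, (hg' a.1 a.2).2⟩
      have hinj : Set.InjOn φ ↑(Φ g) := by
        intro x hx y hy hxy
        obtain ⟨a, ha, rfl, hax⟩ := hφval x hx
        obtain ⟨b, hb, rfl, hbx⟩ := hφval y hy
        have : a = b := by rw [← hax, ← hbx, hxy]
        subst this
        rfl
      have himg : (Φ g).image φ = E := by
        rw [hΦdef, Finset.image_image]
        have : ∀ a ∈ E.attach, (φ ∘ fun a => g a.1 a.2) a = a.1 := by
          intro a _
          exact (hg' a.1 a.2).2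
        rw [Finset.image_congr (fun a ha => this a ha)]
        simp [Finset.attach_image_val]
      rw [Finset.mem_coe, Finset.mem_filter]
      exact ⟨(rg_mem_blowupOf hφH).2 ⟨hval, hinj, himg ▸ hE⟩, himg⟩
    · intro g hg g' hg' heq
      have hg1 := hgmem g hg
      have hg2 := hgmem g' hg'
      funext a ha
      have hmem : g a ha ∈ Φ g' := by
        rw [← heq, hΦdef]
        simp only [Finset.mem_image, Finset.mem_attach, true_and]
        exact ⟨⟨a, ha⟩, rfl⟩
      rw [hΦdef] at hmem
      simp only [Finset.mem_image, Finset.mem_attach, true_and] at hmem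
      obtain ⟨b, hb⟩ := hmem
      have hba : b.1 = a := by
        have h1 := (hg2 b.1 b.2).2
        have h2 := (hg1 a ha).2
        rw [hb] at h1
        rw [← h1, h2]
      rcases b with ⟨b1, b2⟩
      subst hba
      exact hb.symm
  -- real estimates
  have hreal : ∀ E ∈ H.edges, (∏ i ∈ E, μ i) * (n : ℝ) ^ r - (r : ℝ) * (n : ℝ) ^ (r - 1)
      ≤ (∏ i ∈ E, msz i : ℕ) := by
    intro E hE
    have hEvalid : ∀ i ∈ E, i < h := fun i hi => H.valid E hE i hi
    have hcardE : E.card = r := H.uniform E hE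
    have key := rg_prod_sub_prod_le E (fun i => μ i * n) (fun i => (m0 i : ℝ)) n
      (by positivity) (fun i _ => by
        show (0:ℝ) ≤ ((m0 i : ℕ) : ℝ)
        positivity) (fun i _ => hb_le_a i)
      (fun i hi => by
        have h1 := hμ1 i (hEvalid i hi)
        have h2 : (0:ℝ) ≤ (n:ℝ) := by positivity
        show μ i * (n:ℝ) ≤ (n:ℝ)
        nlinarith)
      (fun i _ => by
        have := Nat.lt_floor_add_one (μ i * n)
        simp only [hm0def]
        linarith)
    rw [hcardE] at key
    have hprodeq : ∏ i ∈ E, (μ i * (n : ℝ)) = (∏ i ∈ E, μ i) * (n : ℝ) ^ r := by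
      rw [Finset.prod_mul_distrib, Finset.prod_const, hcardE]
    have hmsz_ge : ∏ i ∈ E, ((m0 i : ℕ) : ℝ) ≤ (∏ i ∈ E, msz i : ℕ) := by
      push_cast
      refine Finset.prod_le_prod (fun i _ => by positivity) (fun i _ => ?_)
      have : m0 i ≤ msz i := by simp only [hmszdef]; omega
      exact_mod_cast this
    rw [hprodeq] at key
    linarith
  calc lamW H μ * (n : ℝ) ^ r - (H.edges.card : ℝ) * r * (n : ℝ) ^ (r - 1)
      = ∑ E ∈ H.edges, ((∏ i ∈ E, μ i) * (n : ℝ) ^ r - (r : ℝ) * (n : ℝ) ^ (r - 1)) := by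
        rw [Finset.sum_sub_distrib, ← Finset.sum_mul]
        unfold lamW
        rw [Finset.sum_const, nsmul_eq_mul]
        ring
    _ ≤ ∑ E ∈ H.edges, ((∏ i ∈ E, msz i : ℕ) : ℝ) := Finset.sum_le_sum hreal
    _ = ((∑ E ∈ H.edges, ∏ i ∈ E, msz i : ℕ) : ℝ) := by push_cast; ring
    _ ≤ (G.edges.card : ℝ) := by exact_mod_cast hcount
    _ ≤ (mFam 𝔥 n : ℝ) := by exact_mod_cast hmFam

lemma rg_exists_selection (n : ℕ) (hn : 1 ≤ n) (N : ℕ) (w : ℕ → ℝ) (hw : ∀ v, 0 ≤ w v)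
    (φ : ℕ → ℕ)
    (hfib : ∀ i < n, ∑ v ∈ (Finset.range N).filter (fun v => φ v = i), w v = (n : ℝ)⁻¹)
    (Δ : Finset (Finset ℕ)) (hΔcard : ∀ S ∈ Δ, S.card = r) (hΔval : ∀ S ∈ Δ, ∀ v ∈ S, v < N) :
    ∃ t : ℕ → ℕ, (∀ i < n, t i ∈ (Finset.range N).filter (fun v => φ v = i)) ∧
      (((Finset.powersetCard r (Finset.range n)).filter (fun e => e.image t ∈ Δ)).card : ℝ)
        ≤ (n : ℝ) ^ r * ∑ S ∈ Δ, ∏ v ∈ S, w v := by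
  classical
  set fib : ℕ → Finset ℕ := fun i => (Finset.range N).filter (fun v => φ v = i) with hfibdef
  set B := Finset.powersetCard r (Finset.range n) with hBdef
  have hnR : (0:ℝ) < (n:ℝ) := by positivity
  have hfib_disj : ∀ i j : ℕ, i ≠ j → Disjoint (fib i) (fib j) := by
    intro i j hij
    rw [Finset.disjoint_left]
    intro v hvi hvj
    rw [hfibdef, Finset.mem_filter] at hvi hvj
    exact hij (hvi.2 ▸ hvj.2 ▸ rfl)
  set A : Finset ℕ → ℕ → ℝ := fun S v => ∑ u ∈ fib v ∩ S, w u with hAdef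
  have hA_nonneg : ∀ S v, 0 ≤ A S v := fun S v => Finset.sum_nonneg fun u _ => hw u
  set T := Fintype.piFinset (fun i : Fin n => fib i.val) with hTdef
  set P : (Fin n → ℕ) → ℝ := fun σ => ∏ i, ((n:ℝ) * w (σ i)) with hPdef
  have hP_nonneg : ∀ σ, 0 ≤ P σ :=
    fun σ => Finset.prod_nonneg fun i _ => mul_nonneg (le_of_lt hnR) (hw _)
  set tOf : (Fin n → ℕ) → ℕ → ℕ := fun σ v => if h : v < n then σ ⟨v, h⟩ else 0 with htOfdef
  have hfull : ∀ i : Fin n, ∑ v ∈ fib i.val, ((n:ℝ) * w v) = 1 := by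
    intro i
    rw [← Finset.mul_sum, hfib i.val i.2]
    field_simp
  have hPsum : ∑ σ ∈ T, P σ = 1 := by
    have h1 : ∏ i : Fin n, ∑ v ∈ fib i.val, ((n:ℝ) * w v) = ∑ σ ∈ T, P σ :=
      Finset.prod_univ_sum (fun i : Fin n => fib i.val) (fun _ v => (n:ℝ) * w v)
    rw [← h1, Finset.prod_congr rfl (fun i _ => hfull i), Finset.prod_const_one]
  have hprod_eF : ∀ (e : Finset ℕ), (∀ v ∈ e, v < n) → ∀ (G : ℕ → ℝ),
      ∏ i ∈ Finset.univ.filter (fun i : Fin n => i.val ∈ e), G i.val = ∏ v ∈ e, G v := by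
    intro e he G
    apply Finset.prod_bij (i := fun (a : Fin n) _ => a.val)
    · intro a ha
      exact (Finset.mem_filter.1 ha).2
    · intro a _ b _ hab
      exact Fin.ext hab
    · intro v hv
      exact ⟨⟨v, he v hv⟩, Finset.mem_filter.2 ⟨Finset.mem_univ _, hv⟩, rfl⟩
    · intro a _
      rfl
  have hcard_eF : ∀ (e : Finset ℕ), (∀ v ∈ e, v < n) →
      (Finset.univ.filter (fun i : Fin n => i.val ∈ e)).card = e.card := by
    intro e he
    apply Finset.card_bij (i := fun (a : Fin n) _ => a.val)
    · intro a ha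
      exact (Finset.mem_filter.1 ha).2
    · intro a _ b _ hab
      exact Fin.ext hab
    · intro v hv
      exact ⟨⟨v, he v hv⟩, Finset.mem_filter.2 ⟨Finset.mem_univ _, hv⟩, rfl⟩
  -- claim per S: transversal-structured sum is at most the product over S
  have claimS : ∀ S ∈ Δ, ∑ e ∈ B, ∏ v ∈ e, A S v ≤ ∏ v ∈ S, w v := by
    intro S hS
    have hScard : S.card = r := hΔcard S hS
    have hwS : (0:ℝ) ≤ ∏ v ∈ S, w v := Finset.prod_nonneg fun v _ => hw v
    set I := (Finset.range n).filter (fun i => (fib i ∩ S).Nonempty) with hIdef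
    have hdisj2 : ∀ x ∈ I, ∀ y ∈ I, x ≠ y → Disjoint (fib x ∩ S) (fib y ∩ S) := by
      intro x _ y _ hxy
      exact Disjoint.mono Finset.inter_subset_left Finset.inter_subset_left (hfib_disj x y hxy)
    have hIcard : I.card ≤ r := by
      have hsub : I.biUnion (fun i => fib i ∩ S) ⊆ S :=
        Finset.biUnion_subset.2 fun i _ => Finset.inter_subset_right
      have h1 : I.card ≤ ∑ i ∈ I, (fib i ∩ S).card := by
        rw [Finset.card_eq_sum_ones I]
        exact Finset.sum_le_sum fun i hi =>
          Finset.card_pos.2 ((Finset.mem_filter.1 hi).2)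
      rw [← Finset.card_biUnion hdisj2] at h1
      exact le_trans h1 (le_trans (Finset.card_le_card hsub) (le_of_eq hScard))
    have hsubI : ∀ e ∈ B, (∏ v ∈ e, A S v ≠ 0) → e = I := by
      intro e heB hene
      rw [hBdef, Finset.mem_powersetCard] at heB
      have hsub : e ⊆ I := by
        intro v hv
        have hAv : A S v ≠ 0 := by
          intro h0
          exact hene (Finset.prod_eq_zero hv h0)
        have : (fib v ∩ S).Nonempty := by
          rw [Finset.nonempty_iff_ne_empty]
          intro hemp
          apply hAv
          rw [hAdef]
          simp only
          rw [hemp, Finset.sum_empty]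
        exact Finset.mem_filter.2 ⟨heB.1 hv, this⟩
      exact Finset.eq_of_subset_of_card_le hsub (le_trans hIcard (le_of_eq heB.2.symm))
    by_cases hex : ∃ e0 ∈ B, ∏ v ∈ e0, A S v ≠ 0
    · obtain ⟨e0, he0B, he0ne⟩ := hex
      have he0card : e0.card = r := (Finset.mem_powersetCard.1 (hBdef ▸ he0B)).2
      have hsingle : ∑ e ∈ B, ∏ v ∈ e, A S v = ∏ v ∈ e0, A S v := by
        apply Finset.sum_eq_single_of_mem e0 he0B
        intro e heB hene
        by_contra h0
        exact hene ((hsubI e heB h0).trans (hsubI e0 he0B he0ne).symm)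
      rw [hsingle]
      have hne : ∀ v ∈ e0, (fib v ∩ S).Nonempty := by
        intro v hv
        have hAv : A S v ≠ 0 := fun h0 => he0ne (Finset.prod_eq_zero hv h0)
        rw [Finset.nonempty_iff_ne_empty]
        intro hemp
        apply hAv
        rw [hAdef]
        simp only
        rw [hemp, Finset.sum_empty]
      have hdisj3 : ∀ x ∈ e0, ∀ y ∈ e0, x ≠ y → Disjoint (fib x ∩ S) (fib y ∩ S) := by
        intro x _ y _ hxy
        exact Disjoint.mono Finset.inter_subset_left Finset.inter_subset_left
          (hfib_disj x y hxy)
      have hsubS2 : e0.biUnion (fun v => fib v ∩ S) ⊆ S :=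
        Finset.biUnion_subset.2 fun v _ => Finset.inter_subset_right
      have hcsum : ∑ v ∈ e0, (fib v ∩ S).card ≤ r := by
        rw [← Finset.card_biUnion hdisj3]
        exact le_trans (Finset.card_le_card hsubS2) (le_of_eq hScard)
      have hone : ∀ v ∈ e0, (fib v ∩ S).card = 1 := by
        by_contra hcon
        push_neg at hcon
        obtain ⟨v0, hv0, hv0ne⟩ := hcon
        have hv0ge : 2 ≤ (fib v0 ∩ S).card := by
          have := Finset.card_pos.2 (hne v0 hv0)
          omega
        have : ∑ v ∈ e0, 1 < ∑ v ∈ e0, (fib v ∩ S).card := by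
          apply Finset.sum_lt_sum
          · intro v hv
            exact Finset.card_pos.2 (hne v hv)
          · exact ⟨v0, hv0, by omega⟩
        rw [Finset.sum_const, smul_eq_mul, mul_one, he0card] at this
        omega
      have hcover : e0.biUnion (fun v => fib v ∩ S) = S := by
        apply Finset.eq_of_subset_of_card_le hsubS2
        rw [Finset.card_biUnion hdisj3, Finset.sum_congr rfl hone, Finset.sum_const,
          smul_eq_mul, mul_one, he0card, hScard]
      have hprodS : ∏ v ∈ S, w v = ∏ v ∈ e0, ∏ u ∈ fib v ∩ S, w u := by
        conv_lhs => rw [← hcover]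
        exact Finset.prod_biUnion (fun x hx y hy hxy =>
          hdisj3 x (Finset.mem_coe.1 hx) y (Finset.mem_coe.1 hy) hxy)
      rw [hprodS]
      apply le_of_eq
      refine Finset.prod_congr rfl fun v hv => ?_
      obtain ⟨x, hx⟩ := Finset.card_eq_one.1 (hone v hv)
      rw [hAdef]
      simp only
      rw [hx, Finset.sum_singleton, Finset.prod_singleton]
    · push_neg at hex
      have : ∑ e ∈ B, ∏ v ∈ e, A S v = 0 :=
        Finset.sum_eq_zero fun e he => hex e he
      rw [this]
      exact hwS
  -- expectation bound
  have key2 : ∑ σ ∈ T, P σ * ((B.filter (fun e => e.image (tOf σ) ∈ Δ)).card : ℝ)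
      ≤ (n:ℝ) ^ r * ∑ S ∈ Δ, ∏ v ∈ S, w v := by
    have hcast : ∀ σ, ((B.filter (fun e => e.image (tOf σ) ∈ Δ)).card : ℝ)
        = ∑ e ∈ B, (if e.image (tOf σ) ∈ Δ then (1:ℝ) else 0) := by
      intro σ
      rw [Finset.card_filter]
      push_cast
      rfl
    calc ∑ σ ∈ T, P σ * ((B.filter (fun e => e.image (tOf σ) ∈ Δ)).card : ℝ)
        = ∑ e ∈ B, ∑ σ ∈ T, P σ * (if e.image (tOf σ) ∈ Δ then (1:ℝ) else 0) := by
          rw [Finset.sum_comm]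
          refine Finset.sum_congr rfl fun σ _ => ?_
          rw [hcast σ, Finset.mul_sum]
      _ ≤ ∑ e ∈ B, ∑ S ∈ Δ, (n:ℝ) ^ r * ∏ v ∈ e, A S v := by
          refine Finset.sum_le_sum fun e heB => ?_
          have heB' := Finset.mem_powersetCard.1 (hBdef ▸ heB)
          have heval : ∀ v ∈ e, v < n := fun v hv => Finset.mem_range.1 (heB'.1 hv)
          have hecard : e.card = r := heB'.2
          set eF := Finset.univ.filter (fun i : Fin n => i.val ∈ e) with heFdef
          have step1 : ∀ σ ∈ T, P σ * (if e.image (tOf σ) ∈ Δ then (1:ℝ) else 0)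
              ≤ ∑ S ∈ Δ, P σ * ∏ i ∈ eF, (if σ i ∈ S then (1:ℝ) else 0) := by
            intro σ _
            have h1 : (if e.image (tOf σ) ∈ Δ then (1:ℝ) else 0)
                = ∑ S ∈ Δ, (if e.image (tOf σ) = S then (1:ℝ) else 0) := by
              rw [Finset.sum_ite_eq Δ (e.image (tOf σ)) (fun _ => (1:ℝ))]
            rw [h1, Finset.mul_sum]
            refine Finset.sum_le_sum fun S _ => ?_
            apply mul_le_mul_of_nonneg_left _ (hP_nonneg σ)
            split_ifs with himg
            · apply le_of_eq
              symm
              apply Finset.prod_eq_one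
              intro i hi
              have hie : i.val ∈ e := (Finset.mem_filter.1 hi).2
              have : σ i ∈ e.image (tOf σ) := by
                refine Finset.mem_image.2 ⟨i.val, hie, ?_⟩
                simp only [htOfdef]
                rw [dif_pos i.isLt]
              rw [himg] at this
              rw [if_pos this]
            · exact Finset.prod_nonneg fun i _ => by positivity
          calc ∑ σ ∈ T, P σ * (if e.image (tOf σ) ∈ Δ then (1:ℝ) else 0)
              ≤ ∑ σ ∈ T, ∑ S ∈ Δ, P σ * ∏ i ∈ eF, (if σ i ∈ S then (1:ℝ) else 0) :=
                Finset.sum_le_sum step1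
            _ = ∑ S ∈ Δ, ∑ σ ∈ T, P σ * ∏ i ∈ eF, (if σ i ∈ S then (1:ℝ) else 0) :=
                Finset.sum_comm
            _ ≤ ∑ S ∈ Δ, (n:ℝ) ^ r * ∏ v ∈ e, A S v := by
                refine Finset.sum_le_sum fun S _ => ?_
                apply le_of_eq
                have hfact : ∀ σ, P σ * ∏ i ∈ eF, (if σ i ∈ S then (1:ℝ) else 0)
                    = ∏ i : Fin n, (((n:ℝ) * w (σ i)) *
                        (if i ∈ eF then (if σ i ∈ S then (1:ℝ) else 0) else 1)) := by
                  intro σ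
                  rw [Finset.prod_mul_distrib]
                  congr 1
                  rw [Finset.prod_ite_mem Finset.univ eF
                    (fun i => (if σ i ∈ S then (1:ℝ) else 0)), Finset.univ_inter]
                have hswap : ∑ σ ∈ T, ∏ i : Fin n, (((n:ℝ) * w (σ i)) *
                    (if i ∈ eF then (if σ i ∈ S then (1:ℝ) else 0) else 1))
                    = ∏ i : Fin n, ∑ v ∈ fib i.val, (((n:ℝ) * w v) *
                        (if i ∈ eF then (if v ∈ S then (1:ℝ) else 0) else 1)) :=
                  (Finset.prod_univ_sum (fun i : Fin n => fib i.val)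
                    (fun i v => ((n:ℝ) * w v) *
                      (if i ∈ eF then (if v ∈ S then (1:ℝ) else 0) else 1))).symm
                have hfacteval : ∀ i : Fin n,
                    ∑ v ∈ fib i.val, (((n:ℝ) * w v) *
                      (if i ∈ eF then (if v ∈ S then (1:ℝ) else 0) else 1))
                    = (if i ∈ eF then (n:ℝ) * A S i.val else 1) := by
                  intro i
                  by_cases hi : i ∈ eF
                  · rw [if_pos hi]
                    have : ∀ v ∈ fib i.val, ((n:ℝ) * w v) *
                        (if i ∈ eF then (if v ∈ S then (1:ℝ) else 0) else 1)
                        = (if v ∈ S then (n:ℝ) * w v else 0) := by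
                      intro v _
                      rw [if_pos hi]
                      split_ifs
                      · rw [mul_one]
                      · rw [mul_zero]
                    rw [Finset.sum_congr rfl this, Finset.sum_ite_mem]
                    simp only [hAdef, Finset.mul_sum]
                  · rw [if_neg hi]
                    have : ∀ v ∈ fib i.val, ((n:ℝ) * w v) *
                        (if i ∈ eF then (if v ∈ S then (1:ℝ) else 0) else 1)
                        = (n:ℝ) * w v := by
                      intro v _
                      rw [if_neg hi, mul_one]
                    rw [Finset.sum_congr rfl this]
                    exact hfull i
                calc ∑ σ ∈ T, P σ * ∏ i ∈ eF, (if σ i ∈ S then (1:ℝ) else 0)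
                    = ∑ σ ∈ T, ∏ i : Fin n, (((n:ℝ) * w (σ i)) *
                        (if i ∈ eF then (if σ i ∈ S then (1:ℝ) else 0) else 1)) := by
                      exact Finset.sum_congr rfl fun σ _ => hfact σ
                  _ = ∏ i : Fin n, (if i ∈ eF then (n:ℝ) * A S i.val else 1) := by
                      rw [hswap]
                      exact Finset.prod_congr rfl fun i _ => hfacteval i
                  _ = ∏ i ∈ eF, ((n:ℝ) * A S i.val) := by
                      rw [Finset.prod_ite_mem Finset.univ eF
                        (fun i => (n:ℝ) * A S i.val), Finset.univ_inter]
                  _ = (n:ℝ) ^ r * ∏ v ∈ e, A S v := by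
                      rw [Finset.prod_mul_distrib, Finset.prod_const, hcard_eF e heval,
                        hecard, hprod_eF e heval (A S)]
      _ = ∑ S ∈ Δ, (n:ℝ)^r * ∑ e ∈ B, ∏ v ∈ e, A S v := by
          rw [Finset.sum_comm]
          exact Finset.sum_congr rfl fun S _ => (Finset.mul_sum _ _ _).symm
      _ ≤ ∑ S ∈ Δ, (n:ℝ)^r * ∏ v ∈ S, w v := by
          refine Finset.sum_le_sum fun S hS => ?_
          exact mul_le_mul_of_nonneg_left (claimS S hS) (by positivity)
      _ = (n:ℝ)^r * ∑ S ∈ Δ, ∏ v ∈ S, w v := (Finset.mul_sum _ _ _).symm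
  -- extract a good σ
  have hexists : ∃ σ ∈ T,
      ((B.filter (fun e => e.image (tOf σ) ∈ Δ)).card : ℝ)
        ≤ (n:ℝ) ^ r * ∑ S ∈ Δ, ∏ v ∈ S, w v := by
    by_contra hcon
    push_neg at hcon
    have hσ0 : ∃ σ0 ∈ T, 0 < P σ0 := by
      by_contra hcon2
      push_neg at hcon2
      have : ∑ σ ∈ T, P σ ≤ 0 := Finset.sum_nonpos fun σ hσ => hcon2 σ hσ
      rw [hPsum] at this
      linarith
    obtain ⟨σ0, hσ0T, hσ0pos⟩ := hσ0
    set R := (n:ℝ) ^ r * ∑ S ∈ Δ, ∏ v ∈ S, w v with hRdef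
    have hlt : ∑ σ ∈ T, P σ * R < ∑ σ ∈ T,
        P σ * ((B.filter (fun e => e.image (tOf σ) ∈ Δ)).card : ℝ) := by
      apply Finset.sum_lt_sum
      · intro σ hσ
        exact mul_le_mul_of_nonneg_left (le_of_lt (hcon σ hσ)) (hP_nonneg σ)
      · exact ⟨σ0, hσ0T, by
          apply mul_lt_mul_of_pos_left (hcon σ0 hσ0T) hσ0pos⟩
    rw [← Finset.sum_mul, hPsum, one_mul] at hlt
    exact absurd (lt_of_lt_of_le hlt key2) (lt_irrefl R)
  obtain ⟨σ, hσT, hσle⟩ := hexists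
  refine ⟨tOf σ, ?_, hσle⟩
  intro i hi
  have := Fintype.mem_piFinset.1 (hTdef ▸ hσT) ⟨i, hi⟩
  simp only [htOfdef]
  rw [dif_pos hi]
  exact this

lemma rg_distFam_le_of_common {𝔥 : Set (RGraph r)} (hc : Clonable 𝔥)
    {F H G1 G2 : RGraph r} (hH : H ∈ 𝔥) {w : ℕ → ℝ}
    (hn : 1 ≤ F.n) (hNN : G1.n = G2.n)
    (hB1 : WIsBlowup F (uniformW F) G1 w) (hB2 : ∃ ν, WIsBlowup H ν G2 w) :
    distFam 𝔥 F ≤ (F.n : ℝ) ^ r * dPrime G1.edges G2.edges w := by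
  classical
  obtain ⟨hw1, φ1, hbm1, hfib1⟩ := hB1
  obtain ⟨ν, hw2, φ2, hbm2, hfib2⟩ := hB2
  set n := F.n with hndef
  set N := G1.n with hNdef
  set Δ := symmDiff G1.edges G2.edges with hΔdef
  have hΔcard : ∀ S ∈ Δ, S.card = r := by
    intro S hS
    rw [hΔdef, Finset.mem_symmDiff] at hS
    rcases hS with ⟨h1, _⟩ | ⟨h2, _⟩
    · exact G1.uniform S h1
    · exact G2.uniform S h2
  have hΔval : ∀ S ∈ Δ, ∀ v ∈ S, v < N := by
    intro S hS v hv
    rw [hΔdef, Finset.mem_symmDiff] at hS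
    rcases hS with ⟨h1, _⟩ | ⟨h2, _⟩
    · exact G1.valid S h1 v hv
    · exact hNN ▸ G2.valid S h2 v hv
  have hfib : ∀ i < n, ∑ v ∈ (Finset.range N).filter (fun v => φ1 v = i), w v = (n:ℝ)⁻¹ := by
    intro i hi
    have h1 := hfib1 i hi
    have h2 : uniformW F i = (n:ℝ)⁻¹ := by
      unfold uniformW
      rw [if_pos hi]
    rw [h2] at h1
    exact h1.symm
  obtain ⟨t, htmem, htbound⟩ := rg_exists_selection n hn N w hw1.1 φ1 hfib Δ hΔcard hΔval
  have htprop : ∀ i < n, t i < N ∧ φ1 (t i) = i := by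
    intro i hi
    have := htmem i hi
    rw [Finset.mem_filter, Finset.mem_range] at this
    exact this
  have htinj : ∀ i < n, ∀ j < n, t i = t j → i = j := by
    intro i hi j hj hij
    rw [← (htprop i hi).2, ← (htprop j hj).2, hij]
  set ψ : ℕ → ℕ := fun v => if v < n then φ2 (t v) else 0 with hψdef
  have hψlt : ∀ v < n, ψ v < H.n := by
    intro v hv
    simp only [hψdef]
    rw [if_pos hv]
    exact hbm2.1 _ (hNN ▸ (htprop v hv).1)
  set H' := blowupOf H n ψ with hH'def
  have hH'mem : H' ∈ 𝔥 := hc H hH H' ⟨ψ, rg_isBlowupMap_blowupOf hψlt⟩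
  have himgF : ∀ e : Finset ℕ, (∀ v ∈ e, v < n) → (e ∈ F.edges ↔ e.image t ∈ G1.edges) := by
    intro e he
    have himφ1 : (e.image t).image φ1 = e := by
      rw [Finset.image_image]
      ext x
      simp only [Finset.mem_image, Function.comp]
      constructor
      · rintro ⟨v, hv, hx⟩
        rw [(htprop v (he v hv)).2] at hx
        exact hx ▸ hv
      · intro hx
        exact ⟨x, hx, (htprop x (he x hx)).2⟩
    constructor
    · intro heF
      refine (hbm1.2 (e.image t)).2 ⟨?_, ?_, ?_⟩
      · intro u hu
        obtain ⟨v, hv, rfl⟩ := Finset.mem_image.1 hu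
        exact (htprop v (he v hv)).1
      · intro x hx y hy hxy
        obtain ⟨a, ha, rfl⟩ := Finset.mem_image.1 (Finset.mem_coe.1 hx)
        obtain ⟨b, hb, rfl⟩ := Finset.mem_image.1 (Finset.mem_coe.1 hy)
        rw [(htprop a (he a ha)).2, (htprop b (he b hb)).2] at hxy
        rw [hxy]
      · rw [himφ1]
        exact heF
    · intro hG
      have hmem := ((hbm1.2 (e.image t)).1 hG).2.2
      rw [himφ1] at hmem
      exact hmem
  have himgH : ∀ e : Finset ℕ, (∀ v ∈ e, v < n) → (e ∈ H'.edges ↔ e.image t ∈ G2.edges) := by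
    intro e he
    have htinje : Set.InjOn t ↑e := by
      intro x hx y hy hxy
      exact htinj x (he x (Finset.mem_coe.1 hx)) y (he y (Finset.mem_coe.1 hy)) hxy
    have hψim : e.image ψ = (e.image t).image φ2 := by
      rw [Finset.image_image]
      apply Finset.image_congr
      intro v hv
      simp only [hψdef, Function.comp]
      rw [if_pos (he v hv)]
    constructor
    · intro heH'
      obtain ⟨hval', hinjψ, himψ⟩ := (rg_mem_blowupOf hψlt).1 heH'
      refine (hbm2.2 (e.image t)).2 ⟨?_, ?_, ?_⟩
      · intro u hu
        obtain ⟨v, hv, rfl⟩ := Finset.mem_image.1 hu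
        exact hNN ▸ (htprop v (he v hv)).1
      · intro x hx y hy hxy
        obtain ⟨a, ha, rfl⟩ := Finset.mem_image.1 (Finset.mem_coe.1 hx)
        obtain ⟨b, hb, rfl⟩ := Finset.mem_image.1 (Finset.mem_coe.1 hy)
        have hψab : ψ a = ψ b := by
          simp only [hψdef]
          rw [if_pos (he a ha), if_pos (he b hb)]
          exact hxy
        have hab := hinjψ (Finset.mem_coe.2 ha) (Finset.mem_coe.2 hb) hψab
        rw [hab]
      · rw [← hψim]
        exact himψ
    · intro hG
      obtain ⟨hval2, hinj2, him2⟩ := (hbm2.2 (e.image t)).1 hG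
      refine (rg_mem_blowupOf hψlt).2 ⟨he, ?_, ?_⟩
      · intro x hx y hy hxy
        have h1 : ψ x = φ2 (t x) := by
          simp only [hψdef]
          rw [if_pos (he x (Finset.mem_coe.1 hx))]
        have h2 : ψ y = φ2 (t y) := by
          simp only [hψdef]
          rw [if_pos (he y (Finset.mem_coe.1 hy))]
        rw [h1, h2] at hxy
        have htt : t x = t y := hinj2
          (Finset.mem_coe.2 (Finset.mem_image_of_mem t (Finset.mem_coe.1 hx)))
          (Finset.mem_coe.2 (Finset.mem_image_of_mem t (Finset.mem_coe.1 hy))) hxy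
        exact htinje hx hy htt
      · rw [hψim]
        exact him2
  have hsymm_sub : symmDiff F.edges H'.edges ⊆
      (Finset.powersetCard r (Finset.range n)).filter (fun e => e.image t ∈ Δ) := by
    intro e he
    rw [Finset.mem_symmDiff] at he
    have hin : (∀ v ∈ e, v < n) ∧ e.card = r := by
      rcases he with ⟨h1, _⟩ | ⟨h2, _⟩
      · exact ⟨fun v hv => F.valid e h1 v hv, F.uniform e h1⟩
      · exact ⟨fun v hv => H'.valid e h2 v hv, H'.uniform e h2⟩
    rw [Finset.mem_filter, Finset.mem_powersetCard]
    refine ⟨⟨fun v hv => Finset.mem_range.2 (hin.1 v hv), hin.2⟩, ?_⟩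
    rw [hΔdef, Finset.mem_symmDiff]
    rcases he with ⟨h1, h2⟩ | ⟨h1, h2⟩
    · exact Or.inl ⟨(himgF e hin.1).1 h1, fun hg => h2 ((himgH e hin.1).2 hg)⟩
    · exact Or.inr ⟨(himgH e hin.1).1 h1, fun hg => h2 ((himgF e hin.1).2 hg)⟩
  have hdist : distFam 𝔥 F ≤ ((symmDiff F.edges H'.edges).card : ℝ) := by
    apply csInf_le
    · refine ⟨0, ?_⟩
      rintro x ⟨H0, _, _, rfl⟩
      positivity
    · exact ⟨H', hH'mem, rfl, rfl⟩
  calc distFam 𝔥 F ≤ ((symmDiff F.edges H'.edges).card : ℝ) := hdist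
    _ ≤ (((Finset.powersetCard r (Finset.range n)).filter
          (fun e => e.image t ∈ Δ)).card : ℝ) := by
        exact_mod_cast Finset.card_le_card hsymm_sub
    _ ≤ (n:ℝ)^r * ∑ S ∈ Δ, ∏ v ∈ S, w v := htbound
    _ = (F.n:ℝ)^r * dPrime G1.edges G2.edges w := by
        rw [hΔdef]
        rfl

lemma rg_distFam_nonneg (𝔥 : Set (RGraph r)) (F : RGraph r) : 0 ≤ distFam 𝔥 F := by
  apply Real.sInf_nonneg
  rintro x ⟨H, _, _, rfl⟩
  positivity


/-- If `𝔥` is clonable and `𝔉` is `𝔥`-locally stable and `𝔥`-weight stable,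
then `𝔉` is `𝔥`-stable. -/
theorem stable_of_locallyStable_of_weightStable {r : ℕ} (𝔉 𝔥 : Set (RGraph r))
    (hc : Clonable 𝔥) (h1 : HLocallyStable 𝔉 𝔥) (h2 : HWeightStable 𝔉 𝔥) :
    HStable 𝔉 𝔥 := by
  classical
  obtain ⟨ε1, hε1, α1, hα1, n1, hLS⟩ := h1
  obtain ⟨α2, hα2, hWS⟩ := h2
  by_cases hW : ∃ H ∈ 𝔥, ∃ μ : ℕ → ℝ, IsWeight H μ
  case neg =>
    refine ⟨α1, hα1, n1 + 1, fun F hF hnF hd => ?_⟩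
    by_cases hcase : distFam 𝔥 F ≤ ε1 * (F.n : ℝ) ^ r
    · exact hLS F hF (by omega) hcase
    · exfalso
      push_neg at hcase
      have hd0 : 0 < distFam 𝔥 F := lt_of_le_of_lt (by positivity) hcase
      have hne : {x : ℝ | ∃ H ∈ 𝔥, H.n = F.n ∧
          x = ((symmDiff F.edges H.edges).card : ℝ)}.Nonempty := by
        by_contra hemp
        rw [Set.not_nonempty_iff_eq_empty] at hemp
        have hzero : distFam 𝔥 F = 0 := by
          unfold distFam
          rw [hemp, Real.sInf_empty]
        rw [hzero] at hd0
        exact lt_irrefl 0 hd0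
      obtain ⟨x, H0, hH0, hH0n, _⟩ := hne
      exact hW ⟨H0, hH0, uniformW H0, rg_isWeight_uniformW H0 (by omega)⟩
  case pos =>
    obtain ⟨Hs, hHs, μs0, hμs0⟩ := hW
    set L := {x : ℝ | ∃ H ∈ 𝔥, ∃ μ, IsWeight H μ ∧ x = lamW H μ} with hLdef
    have hLne : L.Nonempty := ⟨lamW Hs μs0, Hs, hHs, μs0, hμs0, rfl⟩
    set γ := α2 * ε1 / 4 with hγdef
    have hγpos : 0 < γ := by positivity
    have hsup : lamFam 𝔥 - γ < lamFam 𝔥 := by linarith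
    have hLrfl : lamFam 𝔥 = sSup L := rfl
    obtain ⟨x, hxL, hxgt⟩ := exists_lt_of_lt_csSup hLne (hLrfl ▸ hsup)
    obtain ⟨Hst, hHst, μst, hμst, rfl⟩ := hxL
    set C := (Hst.edges.card : ℝ) * r with hCdef
    have hC0 : 0 ≤ C := by positivity
    set n2 := max 1 (Nat.ceil (C / γ)) with hn2def
    set α := min α1 (α2 * ε1 / 2) with hαdef
    have hαpos : 0 < α := lt_min hα1 (by positivity)
    refine ⟨α, hαpos, max n1 n2, fun F hF hnF hd => ?_⟩
    have hn1F : n1 ≤ F.n := le_trans (le_max_left _ _) hnF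
    have hn2F : n2 ≤ F.n := le_trans (le_max_right _ _) hnF
    have hFn1 : 1 ≤ F.n := le_trans (le_max_left 1 _) hn2F
    have hd0 : 0 ≤ distFam 𝔥 F := rg_distFam_nonneg 𝔥 F
    by_cases hcase : distFam 𝔥 F ≤ ε1 * (F.n : ℝ) ^ r
    · have hres := hLS F hF hn1F hcase
      have hmin : α * distFam 𝔥 F ≤ α1 * distFam 𝔥 F :=
        mul_le_mul_of_nonneg_right (min_le_left _ _) hd0
      linarith
    · push_neg at hcase
      set n := F.n with hndef
      have hnpow : (0:ℝ) < (n:ℝ) ^ r := by positivity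
      have hξ : IsWeight F (uniformW F) := rg_isWeight_uniformW F hFn1
      have hdpos : 0 < distFam 𝔥 F := lt_of_le_of_lt (by positivity) hcase
      have hne : {x : ℝ | ∃ H ∈ 𝔥, H.n = F.n ∧
          x = ((symmDiff F.edges H.edges).card : ℝ)}.Nonempty := by
        by_contra hemp
        rw [Set.not_nonempty_iff_eq_empty] at hemp
        have hzero : distFam 𝔥 F = 0 := by
          unfold distFam
          rw [hemp, Real.sInf_empty]
        rw [hzero] at hdpos
        exact lt_irrefl 0 hdpos
      obtain ⟨_, H0, hH0, hH0n, _⟩ := hne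
      have hH0w : IsWeight H0 (uniformW H0) := by
        apply rg_isWeight_uniformW H0
        rw [hH0n]
        exact hFn1
      set Wst := {x : ℝ | ∃ H ∈ 𝔥, ∃ ν, IsWeight H ν ∧ x = wDist F (uniformW F) H ν}
        with hWstdef
      have hWrfl : wDistFam 𝔥 F (uniformW F) = sInf Wst := rfl
      have hWne : Wst.Nonempty := ⟨_, H0, hH0, uniformW H0, hH0w, rfl⟩
      have hWelem : ∀ x ∈ Wst, ε1 ≤ x ∧ x ≤ 1 := by
        rintro x ⟨H, hH, ν, hν, rfl⟩
        obtain ⟨G1, G2, w, hG12, hB1, hB2⟩ :=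
          rg_exists_common_blowup F H (uniformW F) ν hξ hν
        set V := {y : ℝ | ∃ (G1' G2' : RGraph r) (w' : ℕ → ℝ), G1'.n = G2'.n ∧
          WIsBlowup F (uniformW F) G1' w' ∧ WIsBlowup H ν G2' w' ∧
          y = dPrime G1'.edges G2'.edges w'} with hVdef
        have hVrfl : wDist F (uniformW F) H ν = sInf V := rfl
        have hVne : V.Nonempty := ⟨_, G1, G2, w, hG12, hB1, hB2, rfl⟩
        have hVlow : ∀ y ∈ V, ε1 ≤ y := by
          rintro y ⟨G1', G2', w', hG12', hB1', hB2', rfl⟩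
          have hkey := rg_distFam_le_of_common hc hH hFn1 hG12' hB1' ⟨ν, hB2'⟩
          by_contra hy
          push_neg at hy
          have hlt : (n:ℝ) ^ r * dPrime G1'.edges G2'.edges w' < (n:ℝ) ^ r * ε1 := by
            exact mul_lt_mul_of_pos_left hy hnpow
          have : distFam 𝔥 F < ε1 * (n:ℝ) ^ r := by
            calc distFam 𝔥 F ≤ (n:ℝ) ^ r * dPrime G1'.edges G2'.edges w' := hkey
              _ < (n:ℝ) ^ r * ε1 := hlt
              _ = ε1 * (n:ℝ) ^ r := by ring
          linarith
        have hVbdd : BddBelow V := by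
          refine ⟨0, ?_⟩
          rintro y ⟨G1', G2', w', _, hB1', _, rfl⟩
          exact rg_dPrime_nonneg fun v => hB1'.1.1 v
        constructor
        · rw [hVrfl]
          exact le_csInf hVne hVlow
        · rw [hVrfl]
          have h1le : dPrime G1.edges G2.edges w ≤ 1 := rg_dPrime_le_one hG12 hB1.1
          exact le_trans (csInf_le hVbdd ⟨G1, G2, w, hG12, hB1, hB2, rfl⟩) h1le
      have hWbdd : BddBelow Wst := ⟨ε1, fun x hx => (hWelem x hx).1⟩
      have hwd_ge : ε1 ≤ wDistFam 𝔥 F (uniformW F) := by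
        rw [hWrfl]
        exact le_csInf hWne fun x hx => (hWelem x hx).1
      have hwd_le : wDistFam 𝔥 F (uniformW F) ≤ 1 := by
        rw [hWrfl]
        obtain ⟨x, hx⟩ := hWne
        exact le_trans (csInf_le hWbdd hx) (hWelem x hx).2
      have hstab := hWS F hF (uniformW F) hξ hwd_le
      have hlamF : lamW F (uniformW F) = (F.edges.card : ℝ) / (n:ℝ) ^ r :=
        rg_lamW_uniformW F hFn1
      have hmlow := rg_mFam_ge_blowup hc hHst hμst n hFn1
      have hCn : C * (n:ℝ) ^ (r - 1) ≤ γ * (n:ℝ) ^ r := by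
        rcases Nat.eq_zero_or_pos r with hr | hr
        · have hrR : (r : ℝ) = 0 := by exact_mod_cast hr
          have hCz : C = 0 := by rw [hCdef, hrR, mul_zero]
          rw [hCz, zero_mul]
          positivity
        · have hceil : (C / γ : ℝ) ≤ (n : ℝ) := by
            have h1 : Nat.ceil (C / γ) ≤ n := le_trans (le_max_right 1 _) hn2F
            exact le_trans (Nat.le_ceil _) (by exact_mod_cast h1)
          have hCγn : C ≤ γ * n := by
            rw [div_le_iff₀ hγpos] at hceil
            linarith
          have hpowsplit : (n:ℝ) ^ r = (n:ℝ) ^ (r - 1) * (n:ℝ) := by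
            rw [← pow_succ]
            congr 1
            omega
          rw [hpowsplit]
          have hpow1 : (0:ℝ) ≤ (n:ℝ) ^ (r - 1) := by positivity
          calc C * (n:ℝ) ^ (r - 1) ≤ (γ * n) * (n:ℝ) ^ (r - 1) :=
                mul_le_mul_of_nonneg_right hCγn hpow1
            _ = γ * ((n:ℝ) ^ (r - 1) * (n:ℝ)) := by ring
      -- combine everything
      have h4γ : α2 * ε1 = 4 * γ := by
        rw [hγdef]
        ring
      have h_a : (F.edges.card : ℝ) ≤ lamFam 𝔥 * (n:ℝ) ^ r - 4 * (γ * (n:ℝ) ^ r) := by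
        have h1 : lamW F (uniformW F) ≤ lamFam 𝔥 - α2 * ε1 := by
          have h2 : α2 * ε1 ≤ α2 * wDistFam 𝔥 F (uniformW F) :=
            mul_le_mul_of_nonneg_left hwd_ge (le_of_lt hα2)
          linarith
        rw [hlamF, div_le_iff₀ hnpow] at h1
        calc (F.edges.card : ℝ) ≤ (lamFam 𝔥 - α2 * ε1) * (n:ℝ) ^ r := h1
          _ = lamFam 𝔥 * (n:ℝ) ^ r - 4 * (γ * (n:ℝ) ^ r) := by
              rw [h4γ]
              ring
      have h_b : lamFam 𝔥 * (n:ℝ) ^ r - 2 * (γ * (n:ℝ) ^ r) ≤ (mFam 𝔥 n : ℝ) := by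
        have h1 : (lamFam 𝔥 - γ) * (n:ℝ) ^ r ≤ lamW Hst μst * (n:ℝ) ^ r :=
          mul_le_mul_of_nonneg_right (le_of_lt hxgt) (le_of_lt hnpow)
        have h2 : (Hst.edges.card : ℝ) * r * (n:ℝ) ^ (r - 1) ≤ γ * (n:ℝ) ^ r := by
          rw [← hCdef] at *
          exact hCn
        nlinarith
      have h_c : α * distFam 𝔥 F ≤ 2 * (γ * (n:ℝ) ^ r) := by
        have hα2γ : α ≤ 2 * γ := by
          rw [hγdef]
          calc α ≤ α2 * ε1 / 2 := min_le_right _ _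
            _ = 2 * (α2 * ε1 / 4) := by ring
        have hdle : distFam 𝔥 F ≤ (n:ℝ) ^ r := by
          have := hd
          rw [one_mul] at this
          exact this
        calc α * distFam 𝔥 F ≤ (2 * γ) * distFam 𝔥 F :=
              mul_le_mul_of_nonneg_right hα2γ hd0
          _ ≤ (2 * γ) * (n:ℝ) ^ r := by
              apply mul_le_mul_of_nonneg_left hdle
              positivity
          _ = 2 * (γ * (n:ℝ) ^ r) := by ring
      linarith

end TuranGT
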